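/- Let P, P' ∈ O(n, K) be orthogonal matrices over a field K, and suppose there exist A ∈ GL(n, K) and an invertible diagonal matrix D ∈ GL(2n, K) such that A·[Iₙ | P]·D = [Iₙ | P']. Then P' = E·P·E' for some diagonal matrices E, E' with diagonal entries ±1; in particular if A = Iₙ then P' is obtained from P by multiplying columns by ±1. -/

import Mathlib

open Matrix

/-- An auxiliary "sign-class representative" function: `pmPick x` equals `x` or `-x`,
and is invariant under negation. -/
def pmSetoid (K : Type*) [Ring K] : Setoid K :=
  ⟨fun a b : K => a = b ∨ a = -b, by
    constructor
    · exact fun a => Or.inl rfl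
    · rintro a b (rfl | rfl)
      · exact Or.inl rfl
      · exact Or.inr (neg_neg b).symm
    · rintro a b c (rfl | rfl) (h | h)
      · exact Or.inl h
      · exact Or.inr h
      · exact Or.inr (neg_inj.mpr h)
      · exact Or.inl (by rw [h, neg_neg])⟩

noncomputable def pmPick {K : Type*} [Ring K] (x : K) : K :=
  Quotient.out (Quotient.mk (pmSetoid K) x)

lemma pmPick_spec {K : Type*} [Ring K] (x : K) : pmPick x = x ∨ pmPick x = -x :=
  Quotient.mk_out (s := pmSetoid K) x

lemma pmPick_neg {K : Type*} [Ring K] (x : K) : pmPick (-x) = pmPick x := by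
  unfold pmPick
  congr 1
  exact Quotient.sound (Or.inr rfl)

theorem stmt_13 {K : Type*} [Field K] {n : ℕ}
    (hchar : (2 : K) ≠ 0)
    (P P' : Matrix (Fin n) (Fin n) K)
    (hP : P * Pᵀ = 1) (hP' : P' * P'ᵀ = 1)
    (A : Matrix (Fin n) (Fin n) K) (hA : IsUnit A.det)
    (d : Fin n ⊕ Fin n → K) (hd : ∀ i, d i ≠ 0)
    (h : A * (Matrix.fromCols (1 : Matrix (Fin n) (Fin n) K) P) *
        Matrix.diagonal d = Matrix.fromCols 1 P') :
    ∃ e e' : Fin n → K,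
      (∀ i, e i = 1 ∨ e i = -1) ∧ (∀ i, e' i = 1 ∨ e' i = -1) ∧
        P' = Matrix.diagonal e * P * Matrix.diagonal e' := by
  classical
  set a : Fin n → K := fun i => d (Sum.inl i) with ha
  set b : Fin n → K := fun i => d (Sum.inr i) with hb
  have hdm : (Matrix.diagonal d : Matrix (Fin n ⊕ Fin n) (Fin n ⊕ Fin n) K) =
      Matrix.fromBlocks (Matrix.diagonal a) 0 0 (Matrix.diagonal b) := by
    rw [Matrix.fromBlocks_diagonal]
    congr 1
    funext i
    cases i <;> rfl
  rw [hdm, Matrix.mul_fromCols, Matrix.fromCols_mul_fromBlocks] at h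
  simp only [Matrix.mul_zero, add_zero, zero_add, Matrix.mul_one] at h
  rw [Matrix.fromCols_ext_iff] at h
  obtain ⟨h1, h2⟩ := h
  -- A is the inverse diagonal
  have ha0 : ∀ i, a i ≠ 0 := fun i => hd _
  have hb0 : ∀ i, b i ≠ 0 := fun i => hd _
  have hAd : A = Matrix.diagonal (fun i => (a i)⁻¹) := by
    have : Matrix.diagonal a * Matrix.diagonal (fun i => (a i)⁻¹) = 1 := by
      rw [Matrix.diagonal_mul_diagonal]
      rw [show (fun i => a i * (a i)⁻¹) = fun _ => (1 : K) from
        funext fun i => mul_inv_cancel₀ (ha0 i), Matrix.diagonal_one]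
    calc A = A * (Matrix.diagonal a * Matrix.diagonal (fun i => (a i)⁻¹)) := by
            rw [this, mul_one]
      _ = (A * Matrix.diagonal a) * Matrix.diagonal (fun i => (a i)⁻¹) := by rw [mul_assoc]
      _ = Matrix.diagonal (fun i => (a i)⁻¹) := by rw [h1, one_mul]
  set e : Fin n → K := fun i => (a i)⁻¹ with he
  set e' : Fin n → K := b with he'
  have he0 : ∀ i, e i ≠ 0 := fun i => inv_ne_zero (ha0 i)
  have hP'eq : P' = Matrix.diagonal e * P * Matrix.diagonal e' := by
    rw [← h2, hAd]
  -- orthogonality consequence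
  have hPtP : Pᵀ * P = 1 := mul_eq_one_comm.mp hP
  have key : P * Matrix.diagonal (fun j => e' j * e' j) =
      Matrix.diagonal (fun i => (e i)⁻¹ * (e i)⁻¹) * P := by
    have hE : Matrix.diagonal (fun i => (e i)⁻¹) * Matrix.diagonal e = 1 := by
      rw [Matrix.diagonal_mul_diagonal]
      rw [show (fun i => (e i)⁻¹ * e i) = fun _ => (1 : K) from
        funext fun i => inv_mul_cancel₀ (he0 i), Matrix.diagonal_one]
    have expand : Matrix.diagonal e * (P * Matrix.diagonal (fun j => e' j * e' j) * Pᵀ) *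
        Matrix.diagonal e = 1 := by
      have := hP'
      rw [hP'eq] at this
      calc Matrix.diagonal e * (P * Matrix.diagonal (fun j => e' j * e' j) * Pᵀ) *
            Matrix.diagonal e
          = (Matrix.diagonal e * P * Matrix.diagonal e') *
            (Matrix.diagonal e * P * Matrix.diagonal e')ᵀ := by
            simp only [Matrix.transpose_mul, Matrix.diagonal_transpose,
              ← Matrix.diagonal_mul_diagonal]
            noncomm_ring
        _ = 1 := this
    have mid : P * Matrix.diagonal (fun j => e' j * e' j) * Pᵀ =
        Matrix.diagonal (fun i => (e i)⁻¹) * Matrix.diagonal (fun i => (e i)⁻¹) := by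
      calc P * Matrix.diagonal (fun j => e' j * e' j) * Pᵀ
          = (Matrix.diagonal (fun i => (e i)⁻¹) * Matrix.diagonal e) *
            (P * Matrix.diagonal (fun j => e' j * e' j) * Pᵀ) *
            (Matrix.diagonal e * Matrix.diagonal (fun i => (e i)⁻¹)) := by
            rw [hE]
            rw [Matrix.diagonal_mul_diagonal]
            rw [show (fun i => e i * (e i)⁻¹) = fun _ => (1 : K) from
              funext fun i => mul_inv_cancel₀ (he0 i), Matrix.diagonal_one, one_mul, mul_one]
        _ = Matrix.diagonal (fun i => (e i)⁻¹) *
            (Matrix.diagonal e * (P * Matrix.diagonal (fun j => e' j * e' j) * Pᵀ) *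
             Matrix.diagonal e) * Matrix.diagonal (fun i => (e i)⁻¹) := by
            noncomm_ring
        _ = Matrix.diagonal (fun i => (e i)⁻¹) * Matrix.diagonal (fun i => (e i)⁻¹) := by
            rw [expand, mul_one]
    calc P * Matrix.diagonal (fun j => e' j * e' j)
        = P * Matrix.diagonal (fun j => e' j * e' j) * (Pᵀ * P) := by rw [hPtP, mul_one]
      _ = (P * Matrix.diagonal (fun j => e' j * e' j) * Pᵀ) * P := by noncomm_ring
      _ = Matrix.diagonal (fun i => (e i)⁻¹ * (e i)⁻¹) * P := by
            rw [mid, Matrix.diagonal_mul_diagonal]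
  -- entrywise consequence
  have hsign : ∀ i j, P i j ≠ 0 → e i * e' j = 1 ∨ e i * e' j = -1 := by
    intro i j hPij
    have h3 := congrFun (congrFun key i) j
    rw [Matrix.mul_diagonal, Matrix.diagonal_mul] at h3
    have hei := he0 i
    field_simp at h3
    have hsq : (e i * e' j) * (e i * e' j) = 1 := by
      apply mul_right_cancel₀ hPij
      linear_combination (P i j) * h3
    exact mul_self_eq_one_iff.mp hsq
  -- construct the ±1 scalars
  refine ⟨fun i => e i * (pmPick (e i))⁻¹, fun j => e' j * pmPick ((e' j)⁻¹), ?_, ?_, ?_⟩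
  · intro i
    show e i * (pmPick (e i))⁻¹ = 1 ∨ e i * (pmPick (e i))⁻¹ = -1
    rcases pmPick_spec (e i) with hp | hp <;> rw [hp]
    · left; exact mul_inv_cancel₀ (he0 i)
    · right
      rw [← neg_inv, mul_neg, mul_inv_cancel₀ (he0 i)]
  · intro j
    show e' j * pmPick ((e' j)⁻¹) = 1 ∨ e' j * pmPick ((e' j)⁻¹) = -1
    have hb0j : e' j ≠ 0 := hb0 j
    rcases pmPick_spec ((e' j)⁻¹) with hp | hp <;> rw [hp]
    · left; exact mul_inv_cancel₀ hb0j
    · right; rw [mul_neg, mul_inv_cancel₀ hb0j]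
  · rw [hP'eq]
    ext i j
    rw [Matrix.mul_diagonal, Matrix.mul_diagonal, Matrix.diagonal_mul, Matrix.diagonal_mul]
    by_cases hPij : P i j = 0
    · rw [hPij]; ring
    · rcases hsign i j hPij with hs | hs
      · rw [show ((e' j)⁻¹ : K) = e i from inv_eq_of_mul_eq_one_left hs]
        rcases pmPick_spec (e i) with hp | hp
        · rw [hp, mul_inv_cancel₀ (he0 i)]; ring
        · rw [hp, inv_neg, mul_neg, mul_inv_cancel₀ (he0 i)]; ring
      · rw [show ((e' j)⁻¹ : K) = -(e i) from
          inv_eq_of_mul_eq_one_left (by linear_combination -hs), pmPick_neg]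
        rcases pmPick_spec (e i) with hp | hp
        · rw [hp, mul_inv_cancel₀ (he0 i)]; ring
        · rw [hp, inv_neg, mul_neg, mul_inv_cancel₀ (he0 i)]; ring
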